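/- arXiv:2107.06141 — 8 statements merged into one kernel-verified Lean document; each statement's English description precedes it below -/
import Mathlib

section
/- In the multinomial logit model with J+1 alternatives, fix a duration value d and covariate value x, and let the individual-specific transition probabilities be π_{kj}(α) = exp(α(j) + β_{kj}(d)) / Σ_{ℓ=0}^{J} exp(α(ℓ) + β_{kℓ}(d)) for α ∈ ℝ^{J+1} and real switching-cost parameters β_{kℓ}(d). Then for any three alternatives j, k, ℓ ∈ {0,...,J} with j ≠ k and j ≠ ℓ, and for every α ∈ ℝ^{J+1}: exp(β_{kℓ}(d) − β_{kj}(d) + β_{jj}(d) − β_{jℓ}(d)) = (π_{kℓ}(α) · π_{jj}(α)) / (π_{kj}(α) · π_{jℓ}(α)). (Lemma 1.) -/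
/-- Lemma 1 (multinomial logit): for transition probabilities
`π_{kj}(α) = exp(α j + β k j) / Σ_ℓ exp(α ℓ + β k ℓ)` and any alternatives
`j ≠ k`, `j ≠ ℓ`, we have
`exp(β kℓ − β kj + β jj − β jℓ) = (π kℓ · π jj) / (π kj · π jℓ)`. -/
theorem lemma1_multinomial_logit (J : ℕ)
    (β : Fin (J + 1) → Fin (J + 1) → ℝ)
    (π : (Fin (J + 1) → ℝ) → Fin (J + 1) → Fin (J + 1) → ℝ)
    (hπ : ∀ (α : Fin (J + 1) → ℝ) (k j : Fin (J + 1)),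
      π α k j = Real.exp (α j + β k j) / ∑ l : Fin (J + 1), Real.exp (α l + β k l))
    (j k l : Fin (J + 1)) (hjk : j ≠ k) (hjl : j ≠ l)
    (α : Fin (J + 1) → ℝ) :
    Real.exp (β k l - β k j + β j j - β j l)
      = (π α k l * π α j j) / (π α k j * π α j l) := by
  have hSk : (0:ℝ) < ∑ m : Fin (J + 1), Real.exp (α m + β k m) :=
    Finset.sum_pos (fun m _ => Real.exp_pos _) Finset.univ_nonempty
  have hSj : (0:ℝ) < ∑ m : Fin (J + 1), Real.exp (α m + β j m) :=
    Finset.sum_pos (fun m _ => Real.exp_pos _) Finset.univ_nonempty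
  rw [hπ, hπ, hπ, hπ]
  rw [div_mul_div_comm, div_mul_div_comm, div_div_div_cancel_right₀ (by positivity)]
  rw [eq_div_iff (by positivity)]
  rw [← Real.exp_add, ← Real.exp_add, ← Real.exp_add]
  ring_nf
end

section
/- In the binary choice AR(1) logit model with fixed effect α ∈ ℝ and state-dependence parameter β ∈ ℝ, the n-periods forward individual-specific causal effect Δ^{(n)}(α) (defined via the two-state Markov chain with transition probabilities π_{01}(α) = Λ(α), π_{11}(α) = Λ(α+β)) satisfies, for every n ≥ 1: Δ^{(n)}(α) = (e^β − 1)^n · (π_{10}(α))^n · (π_{01}(α))^n = (e^β − 1)^n · (1 − Λ(α+β))^n · (Λ(α))^n. (Lemma 2.) -/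
/-- The logistic function `Λ(u) = e^u / (1 + e^u)`. -/
noncomputable def logistic (u : ℝ) : ℝ := Real.exp u / (1 + Real.exp u)

lemma logistic_diff (α β : ℝ) :
    logistic (α + β) - logistic α
      = (Real.exp β - 1) * (1 - logistic (α + β)) * logistic α := by
  unfold logistic
  have h1 : (0:ℝ) < 1 + Real.exp α := by positivity
  have h2 : (0:ℝ) < 1 + Real.exp (α + β) := by positivity
  rw [Real.exp_add]
  field_simp
  ring

/-- Lemma 2: in the binary AR(1) logit model, the `n`-periods forward
individual-specific causal effect `Δ⁽ⁿ⁾(α) = E n 1 − E n 0` (with the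
two-state Markov chain recursion `E 0 y = y`,
`E (n+1) y = π01(α) + (π11(α) − π01(α)) · E n y`, where `π01(α) = Λ(α)` and
`π11(α) = Λ(α+β)`) satisfies, for every `n ≥ 1`,
`Δ⁽ⁿ⁾(α) = (e^β − 1)^n · (1 − Λ(α+β))^n · (Λ(α))^n`. -/
theorem lemma2_n_period_effect (α β : ℝ) (E : ℕ → ℝ → ℝ)
    (hE0 : ∀ y : ℝ, E 0 y = y)
    (hEs : ∀ (n : ℕ) (y : ℝ),
      E (n + 1) y = logistic α + (logistic (α + β) - logistic α) * E n y)
    (n : ℕ) (hn : 1 ≤ n) :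
    E n 1 - E n 0
      = (Real.exp β - 1) ^ n * (1 - logistic (α + β)) ^ n * (logistic α) ^ n := by
  have key : ∀ m : ℕ, E m 1 - E m 0 = (logistic (α + β) - logistic α) ^ m := by
    intro m
    induction m with
    | zero => simp [hE0]
    | succ k ih =>
      rw [hEs k 1, hEs k 0, pow_succ, ← ih]
      ring
  rw [key n, logistic_diff, mul_pow, mul_pow]
end

section
/- Let μ be a probability measure on ℝ^{J+1} and let p* : {0,...,J} × ℝ^{J+1} → [0,1] be a measurable function with Σ_{k=0}^{J} p*(k, α) = 1 for all α. With multinomial logit transition probabilities π_{kj}(α) = exp(α(j) + β_{kj}) / Σ_{ℓ=0}^{J} exp(α(ℓ) + β_{kℓ}), define the choice-history probabilities P_{y1,y2} = ∫ p*(y1, α) · π_{y1 y2}(α) dμ(α) and P_{y1,y2,y3} = ∫ p*(y1, α) · π_{y1 y2}(α) · π_{y2 y3}(α) dμ(α), and the average transition probability Π_{jj} = ∫ π_{jj}(α) dμ(α). Then for every alternative j ∈ {0,...,J}: Π_{jj} = P_{j,j} + Σ_{k ≠ j} [ P_{k,j,j} + Σ_{ℓ ≠ j} exp(β_{kℓ}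 − β_{kj} + β_{jj} − β_{jℓ}) · P_{k,j,ℓ} ]. (Proposition 1.) -/
open MeasureTheory

/-- Proposition 1: in the multinomial logit model with transition
probabilities `π_{kj}(α) = exp(α j + β k j) / Σ_ℓ exp(α ℓ + β k ℓ)`,
an arbitrary probability measure `μ` on `ℝ^{J+1}` for the unobserved
heterogeneity, and an unrestricted initial condition `p*(k, α)`
(measurable in `α`, nonnegative, summing to one over `k`), the average
transition probability `Π_{jj} = ∫ π_{jj}(α) dμ(α)` satisfies
`Π_{jj} = P_{j,j} + Σ_{k ≠ j} [P_{k,j,j} + Σ_{ℓ ≠ j} exp(β kℓ − β kj + β jj − β jℓ) · P_{k,j,ℓ}]`,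
where `P_{y1,y2}` and `P_{y1,y2,y3}` are the corresponding choice-history
probabilities. -/
theorem prop1_average_transition (J : ℕ)
    (β : Fin (J + 1) → Fin (J + 1) → ℝ)
    (π : (Fin (J + 1) → ℝ) → Fin (J + 1) → Fin (J + 1) → ℝ)
    (hπ : ∀ (α : Fin (J + 1) → ℝ) (k j : Fin (J + 1)),
      π α k j = Real.exp (α j + β k j) / ∑ l : Fin (J + 1), Real.exp (α l + β k l))
    (μ : Measure (Fin (J + 1) → ℝ)) [IsProbabilityMeasure μ]
    (pstar : Fin (J + 1) → (Fin (J + 1) → ℝ) → ℝ)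
    (hmeas : ∀ k, Measurable (pstar k))
    (hnn : ∀ k α, 0 ≤ pstar k α)
    (hsum : ∀ α, ∑ k : Fin (J + 1), pstar k α = 1)
    (j : Fin (J + 1)) :
    (∫ α, π α j j ∂μ)
      = (∫ α, pstar j α * π α j j ∂μ)
        + ∑ k ∈ Finset.univ.filter (fun k => k ≠ j),
            ((∫ α, pstar k α * π α k j * π α j j ∂μ)
              + ∑ l ∈ Finset.univ.filter (fun l => l ≠ j),
                  Real.exp (β k l - β k j + β j j - β j l)
                    * ∫ α, pstar k α * π α k j * π α j l ∂μ) := by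
  classical
  have hSpos : ∀ (α : Fin (J + 1) → ℝ) (k : Fin (J + 1)),
      0 < ∑ l : Fin (J + 1), Real.exp (α l + β k l) := fun α k =>
    Finset.sum_pos (fun l _ => Real.exp_pos _) ⟨j, Finset.mem_univ j⟩
  have hπnn : ∀ α k l, 0 ≤ π α k l := fun α k l => by
    rw [hπ]; exact div_nonneg (Real.exp_pos _).le (hSpos α k).le
  have hπle : ∀ α k l, π α k l ≤ 1 := fun α k l => by
    rw [hπ, div_le_one (hSpos α k)]
    exact Finset.single_le_sum (f := fun i => Real.exp (α i + β k i))
      (fun i _ => (Real.exp_pos _).le) (Finset.mem_univ l)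
  have hπsum : ∀ α k, ∑ l : Fin (J + 1), π α k l = 1 := fun α k => by
    simp only [hπ]
    rw [← Finset.sum_div, div_self (hSpos α k).ne']
  have hple : ∀ k α, pstar k α ≤ 1 := fun k α =>
    (Finset.single_le_sum (fun i _ => hnn i α) (Finset.mem_univ k)).trans (hsum α).le
  have hπmeas : ∀ k l, Measurable fun α => π α k l := fun k l => by
    simp only [hπ]
    exact ((measurable_pi_apply l).add measurable_const).exp.div
      (Finset.measurable_sum _ fun i _ =>
        ((measurable_pi_apply i).add measurable_const).exp)
  have hint : ∀ f : (Fin (J + 1) → ℝ) → ℝ, Measurable f → (∀ α, 0 ≤ f α) →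
      (∀ α, f α ≤ 1) → Integrable f μ := fun f hm h0 h1 =>
    (integrable_const (1 : ℝ)).mono' hm.aestronglyMeasurable
      (ae_of_all _ fun α => by
        rw [Real.norm_eq_abs, abs_of_nonneg (h0 α)]; exact h1 α)
  have hint3 : ∀ k l, Integrable (fun α => pstar k α * π α k j * π α j l) μ := fun k l =>
    hint _ (((hmeas k).mul (hπmeas k j)).mul (hπmeas j l))
      (fun α => mul_nonneg (mul_nonneg (hnn k α) (hπnn α k j)) (hπnn α j l))
      (fun α => mul_le_one₀
        (mul_le_one₀ (hple k α) (hπnn α k j) (hπle α k j)) (hπnn α j l) (hπle α j l))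
  have hint0 : Integrable (fun α => pstar j α * π α j j) μ :=
    hint _ ((hmeas j).mul (hπmeas j j))
      (fun α => mul_nonneg (hnn j α) (hπnn α j j))
      (fun α => mul_le_one₀ (hple j α) (hπnn α j j) (hπle α j j))
  have hintg1 : ∀ k, Integrable (fun α => pstar k α * π α k j * π α j j
      + ∑ l ∈ Finset.univ.filter (fun l => l ≠ j),
          Real.exp (β k l - β k j + β j j - β j l)
            * (pstar k α * π α k j * π α j l)) μ := fun k =>
    (hint3 k j).add (integrable_finset_sum _ fun l _ => (hint3 k l).const_mul _)
  -- cross identity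
  have hcross : ∀ (α : Fin (J + 1) → ℝ) (k l : Fin (J + 1)),
      Real.exp (β k l - β k j + β j j - β j l) * (pstar k α * π α k j * π α j l)
        = pstar k α * π α j j * π α k l := by
    intro α k l
    have e1 : Real.exp (β k l - β k j + β j j - β j l)
        * (Real.exp (α j + β k j) * Real.exp (α l + β j l))
        = Real.exp (α j + β j j) * Real.exp (α l + β k l) := by
      rw [← Real.exp_add, ← Real.exp_add, ← Real.exp_add]
      congr 1; ring
    rw [hπ α k j, hπ α j l, hπ α j j, hπ α k l]
    have hk := (hSpos α k).ne'
    have hj := (hSpos α j).ne'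
    field_simp
    linear_combination pstar k α * e1
  -- pointwise key identity
  have key : ∀ α : Fin (J + 1) → ℝ,
      pstar j α * π α j j
        + ∑ k ∈ Finset.univ.filter (fun k => k ≠ j),
            (pstar k α * π α k j * π α j j
              + ∑ l ∈ Finset.univ.filter (fun l => l ≠ j),
                  Real.exp (β k l - β k j + β j j - β j l)
                    * (pstar k α * π α k j * π α j l))
      = π α j j := by
    intro α
    have hsub : ∀ k, ∑ l ∈ Finset.univ.filter (fun l => l ≠ j), π α k l
        = 1 - π α k j := by
      intro k
      rw [Finset.filter_ne']
      have h := hπsum α k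
      rw [← Finset.sum_erase_add Finset.univ _ (Finset.mem_univ j)] at h
      linarith
    have hterm : ∀ k, pstar k α * π α k j * π α j j
        + ∑ l ∈ Finset.univ.filter (fun l => l ≠ j),
            Real.exp (β k l - β k j + β j j - β j l)
              * (pstar k α * π α k j * π α j l)
        = pstar k α * π α j j := by
      intro k
      have : ∑ l ∈ Finset.univ.filter (fun l => l ≠ j),
          Real.exp (β k l - β k j + β j j - β j l)
            * (pstar k α * π α k j * π α j l)
          = pstar k α * π α j j * (1 - π α k j) := by
        rw [← hsub k, Finset.mul_sum]
        exact Finset.sum_congr rfl fun l _ => hcross α k l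
      rw [this]; ring
    rw [Finset.sum_congr rfl fun k _ => hterm k]
    rw [Finset.filter_ne', Finset.add_sum_erase _ (fun k => pstar k α * π α j j)
      (Finset.mem_univ j), ← Finset.sum_mul, hsum α, one_mul]
  -- combine integrals
  have rhs_eq :
      (∫ α, pstar j α * π α j j ∂μ)
        + ∑ k ∈ Finset.univ.filter (fun k => k ≠ j),
            ((∫ α, pstar k α * π α k j * π α j j ∂μ)
              + ∑ l ∈ Finset.univ.filter (fun l => l ≠ j),
                  Real.exp (β k l - β k j + β j j - β j l)
                    * ∫ α, pstar k α * π α k j * π α j l ∂μ)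
      = ∫ α, (pstar j α * π α j j
          + ∑ k ∈ Finset.univ.filter (fun k => k ≠ j),
              (pstar k α * π α k j * π α j j
                + ∑ l ∈ Finset.univ.filter (fun l => l ≠ j),
                    Real.exp (β k l - β k j + β j j - β j l)
                      * (pstar k α * π α k j * π α j l))) ∂μ := by
    rw [integral_add hint0 (integrable_finset_sum _ fun k _ => hintg1 k),
        integral_finset_sum _ fun k _ => hintg1 k]
    congr 1
    refine Finset.sum_congr rfl fun k _ => ?_
    rw [integral_add (hint3 k j)
        (integrable_finset_sum _ fun l _ => (hint3 k l).const_mul _),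
        integral_finset_sum _ fun l _ => (hint3 k l).const_mul _]
    congr 1
    exact Finset.sum_congr rfl fun l _ => (integral_const_mul _ _).symm
  rw [rhs_eq]
  exact (integral_congr_ae (ae_of_all _ fun α => key α)).symm
end

section
/- Let μ be a probability measure on ℝ and p* : ℝ → [0,1] a measurable function, interpreted as the probability that the initial choice is 0 given α (so the probability of initial choice 1 is 1 − p*(α)). In the binary AR(1) logit model with transition probabilities π_{01}(α) = Λ(α), π_{11}(α) = Λ(α+β), π_{00}(α) = 1 − Λ(α), π_{10}(α) = 1 − Λ(α+β), define P_{y1,y2} and P_{y1,y2,y3} as the integrals over μ of the product of the initial-condition probability of y1 and the corresponding transition probabilities, and define Π_{11} = ∫ π_{11}(α) dμ(α) and Π_{00} = ∫ π_{00}(α) dμ(α). Then: Π_{11} = P_{1,1} + P_{0,1,1} + e^β · P_{0,1,0}, and Π_{00} = P_{0,0} + P_{1,0,0} + e^β · P_{1,0,1}. (Corollary 1.1, equation (35).) -/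
open MeasureTheory

lemma logistic_nonneg (u : ℝ) : 0 ≤ logistic u := by
  unfold logistic
  positivity

lemma logistic_le_one (u : ℝ) : logistic u ≤ 1 := by
  unfold logistic
  rw [div_le_one (by positivity)]
  linarith

lemma logistic_measurable : Measurable logistic := by
  unfold logistic
  exact Real.measurable_exp.div ((measurable_const.add Real.measurable_exp))

lemma key_identity (α β : ℝ) :
    Real.exp β * (logistic α * (1 - logistic (α + β)))
      = logistic (α + β) * (1 - logistic α) := by
  unfold logistic
  have hA : (0:ℝ) < 1 + Real.exp α := by positivity
  have hB : (0:ℝ) < 1 + Real.exp (α + β) := by positivity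
  field_simp
  rw [Real.exp_add]
  ring

lemma integrable_of_bdd {f : ℝ → ℝ} (μ : Measure ℝ) [IsProbabilityMeasure μ]
    (hf : Measurable f) (hb : ∀ x, |f x| ≤ 1) : Integrable f μ := by
  apply (integrable_const (1:ℝ)).mono' hf.aestronglyMeasurable
  filter_upwards with x
  simpa using hb x

/-- Corollary 1.1, equation (35): in the binary AR(1) logit model with
transition probabilities `π01 = Λ(α)`, `π11 = Λ(α+β)`, `π00 = 1 − Λ(α)`,
`π10 = 1 − Λ(α+β)`, probability measure `μ` on `ℝ` for the heterogeneity,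
and `p*(α)` the probability that the initial choice is 0 given `α`:
`Π11 = P_{1,1} + P_{0,1,1} + e^β · P_{0,1,0}` and
`Π00 = P_{0,0} + P_{1,0,0} + e^β · P_{1,0,1}`. -/
theorem cor11_eq35 (β : ℝ) (μ : Measure ℝ) [IsProbabilityMeasure μ]
    (pstar : ℝ → ℝ) (hmeas : Measurable pstar)
    (h0 : ∀ α, 0 ≤ pstar α) (h1 : ∀ α, pstar α ≤ 1) :
    ((∫ α, logistic (α + β) ∂μ)
      = (∫ α, (1 - pstar α) * logistic (α + β) ∂μ)
        + (∫ α, pstar α * logistic α * logistic (α + β) ∂μ)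
        + Real.exp β * ∫ α, pstar α * logistic α * (1 - logistic (α + β)) ∂μ)
    ∧ ((∫ α, (1 - logistic α) ∂μ)
      = (∫ α, pstar α * (1 - logistic α) ∂μ)
        + (∫ α, (1 - pstar α) * (1 - logistic (α + β)) * (1 - logistic α) ∂μ)
        + Real.exp β * ∫ α, (1 - pstar α) * (1 - logistic (α + β)) * logistic α ∂μ) := by
  have hmeasΛ : Measurable fun α : ℝ => logistic α := logistic_measurable
  have hmeasΛβ : Measurable fun α : ℝ => logistic (α + β) :=
    logistic_measurable.comp (measurable_id.add_const β)
  have bdd : ∀ a b c : ℝ, 0 ≤ a → a ≤ 1 → 0 ≤ b → b ≤ 1 → 0 ≤ c → c ≤ 1 →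
      |a * b * c| ≤ 1 := by
    intro a b c ha ha' hb hb' hc hc'
    rw [abs_of_nonneg (by positivity)]
    calc a * b * c ≤ 1 * 1 * 1 := by gcongr
    _ = 1 := by ring
  constructor
  · have i1 : Integrable (fun α => (1 - pstar α) * logistic (α + β)) μ := by
      apply integrable_of_bdd μ ((measurable_const.sub hmeas).mul hmeasΛβ)
      intro x
      have := bdd (1 - pstar x) (logistic (x + β)) 1 (by linarith [h1 x]) (by linarith [h0 x])
        (logistic_nonneg _) (logistic_le_one _) zero_le_one le_rfl
      simpa using this
    have i2 : Integrable (fun α => pstar α * logistic α * logistic (α + β)) μ := by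
      apply integrable_of_bdd μ ((hmeas.mul hmeasΛ).mul hmeasΛβ)
      intro x
      exact bdd _ _ _ (h0 x) (h1 x) (logistic_nonneg _) (logistic_le_one _)
        (logistic_nonneg _) (logistic_le_one _)
    have i3 : Integrable (fun α => Real.exp β * (pstar α * logistic α * (1 - logistic (α + β)))) μ := by
      have : (fun α => Real.exp β * (pstar α * logistic α * (1 - logistic (α + β))))
          = fun α => logistic (α + β) * (1 - logistic α) * pstar α := by
        funext α
        rw [show pstar α * logistic α * (1 - logistic (α + β))
            = logistic α * (1 - logistic (α + β)) * pstar α by ring, ← mul_assoc,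
          key_identity α β]
      rw [this]
      apply integrable_of_bdd μ ((hmeasΛβ.mul (measurable_const.sub hmeasΛ)).mul hmeas)
      intro x
      exact bdd _ _ _ (logistic_nonneg _) (logistic_le_one _)
        (by simp only [Pi.sub_apply]; linarith [logistic_le_one x]) (by simp only [Pi.sub_apply]; linarith [logistic_nonneg x]) (h0 x) (h1 x)
    rw [show (∫ α, logistic (α + β) ∂μ)
        = ∫ α, ((1 - pstar α) * logistic (α + β)
            + pstar α * logistic α * logistic (α + β)
            + Real.exp β * (pstar α * logistic α * (1 - logistic (α + β)))) ∂μ from by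
      congr 1
      funext α
      linear_combination (-pstar α) * key_identity α β]
    have i12 : Integrable (fun α => (1 - pstar α) * logistic (α + β)
        + pstar α * logistic α * logistic (α + β)) μ := i1.add i2
    rw [integral_add i12 i3, integral_add i1 i2, integral_const_mul]
  · have i1 : Integrable (fun α => pstar α * (1 - logistic α)) μ := by
      apply integrable_of_bdd μ (hmeas.mul (measurable_const.sub hmeasΛ))
      intro x
      have := bdd (pstar x) (1 - logistic x) 1 (h0 x) (h1 x)
        (by linarith [logistic_le_one x]) (by linarith [logistic_nonneg x]) zero_le_one le_rfl
      simpa using this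
    have i2 : Integrable (fun α => (1 - pstar α) * (1 - logistic (α + β)) * (1 - logistic α)) μ := by
      apply integrable_of_bdd μ (((measurable_const.sub hmeas).mul
        (measurable_const.sub hmeasΛβ)).mul (measurable_const.sub hmeasΛ))
      intro x
      exact bdd _ _ _ (by simp only [Pi.sub_apply]; linarith [h1 x]) (by simp only [Pi.sub_apply]; linarith [h0 x])
        (by simp only [Pi.sub_apply]; linarith [logistic_le_one (x + β)]) (by simp only [Pi.sub_apply]; linarith [logistic_nonneg (x + β)])
        (by simp only [Pi.sub_apply]; linarith [logistic_le_one x]) (by simp only [Pi.sub_apply]; linarith [logistic_nonneg x])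
    have i3 : Integrable (fun α => Real.exp β * ((1 - pstar α) * (1 - logistic (α + β)) * logistic α)) μ := by
      have : (fun α => Real.exp β * ((1 - pstar α) * (1 - logistic (α + β)) * logistic α))
          = fun α => logistic (α + β) * (1 - logistic α) * (1 - pstar α) := by
        funext α
        rw [show (1 - pstar α) * (1 - logistic (α + β)) * logistic α
            = logistic α * (1 - logistic (α + β)) * (1 - pstar α) by ring, ← mul_assoc,
          key_identity α β]
      rw [this]
      apply integrable_of_bdd μ ((hmeasΛβ.mul (measurable_const.sub hmeasΛ)).mul
        (measurable_const.sub hmeas))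
      intro x
      exact bdd _ _ _ (logistic_nonneg _) (logistic_le_one _)
        (by simp only [Pi.sub_apply]; linarith [logistic_le_one x]) (by simp only [Pi.sub_apply]; linarith [logistic_nonneg x])
        (by simp only [Pi.sub_apply]; linarith [h1 x]) (by simp only [Pi.sub_apply]; linarith [h0 x])
    rw [show (∫ α, (1 - logistic α) ∂μ)
        = ∫ α, (pstar α * (1 - logistic α)
            + (1 - pstar α) * (1 - logistic (α + β)) * (1 - logistic α)
            + Real.exp β * ((1 - pstar α) * (1 - logistic (α + β)) * logistic α)) ∂μ from by
      congr 1
      funext α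
      linear_combination (pstar α - 1) * key_identity α β]
    have i12 : Integrable (fun α => pstar α * (1 - logistic α)
        + (1 - pstar α) * (1 - logistic (α + β)) * (1 - logistic α)) μ := i1.add i2
    rw [integral_add i12 i3, integral_add i1 i2, integral_const_mul]
end

section
/- Consider the binary AR(1) logit model with T ≥ 2 periods. Suppose w : {0,1}^T → ℝ is a system of weights such that for each initial value y1 ∈ {0,1} and every α ∈ ℝ: Σ_{y ∈ {0,1}^T, first component of y equals y1} w(y) · Π_{t=2}^{T} π_{y_{t−1} y_t}(α) = Λ(α+β) − Λ(α). Then for every probability measure μ on ℝ and every measurable initial-condition function p* : ℝ → [0,1]: Σ_{y ∈ {0,1}^T} w(y) · P_y = ∫ (Λ(α+β) − Λ(α)) dμ(α) = AME^{(1)}, where P_y = ∫ q(y1, α) · Π_{t=2}^{T} π_{y_{t−1} y_t}(α) dμ(α) with q(0,α) = p*(α), q(1,α) = 1 − p*(α). (Sufficiency direction of Lemma 3, specialized to the binary AR(1) model.) -/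
open MeasureTheory

/-- Transition probability of the binary AR(1) logit model:
probability of next choice `y'` given lagged choice `y` and fixed effect `α`,
where the probability of choosing 1 is `Λ(α + β·y)`. -/
noncomputable def logitTrans (α β : ℝ) (y y' : Bool) : ℝ :=
  if y' then logistic (α + β * (if y then 1 else 0))
  else 1 - logistic (α + β * (if y then 1 else 0))

lemma logitTrans_nonneg (α β : ℝ) (a b : Bool) : 0 ≤ logitTrans α β a b := by
  unfold logitTrans; split
  · exact logistic_nonneg _
  · linarith [logistic_le_one (α + β * (if a then 1 else 0))]

lemma logitTrans_le_one (α β : ℝ) (a b : Bool) : logitTrans α β a b ≤ 1 := by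
  unfold logitTrans; split
  · exact logistic_le_one _
  · linarith [logistic_nonneg (α + β * (if a then 1 else 0))]

lemma continuous_logistic : Continuous logistic := by
  unfold logistic
  exact Real.continuous_exp.div (by continuity) (fun u => by positivity)

lemma measurable_prod_trans (β : ℝ) (n : ℕ) (y : Fin (n+1) → Bool) :
    Measurable fun α => ∏ t : Fin n, logitTrans α β (y t.castSucc) (y t.succ) := by
  apply Finset.measurable_prod
  intro t _
  unfold logitTrans
  split
  · exact (continuous_logistic.comp (by continuity)).measurable
  · exact measurable_const.sub (continuous_logistic.comp (by continuity)).measurable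

/-- Sufficiency direction of Lemma 3, specialized to the binary AR(1) logit
model with `T = n + 1 ≥ 2` periods: if the weights `w` satisfy, for each
initial value `y₁` and every `α`,
`Σ_{y : y 0 = y₁} w(y) · Π_t π_{y_{t−1} y_t}(α) = Λ(α+β) − Λ(α)`,
then for every probability measure `μ` on `ℝ` and measurable
initial-condition function `p* : ℝ → [0,1]`,
`Σ_y w(y) · P_y = ∫ (Λ(α+β) − Λ(α)) dμ(α) = AME⁽¹⁾`, where
`P_y = ∫ q(y₁, α) · Π_t π_{y_{t−1} y_t}(α) dμ(α)` with `q(0,α) = p*(α)`,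
`q(1,α) = 1 − p*(α)`. -/
theorem lemma3_sufficiency (β : ℝ) (n : ℕ) (hn : 1 ≤ n)
    (w : (Fin (n + 1) → Bool) → ℝ)
    (hw : ∀ (y1 : Bool) (α : ℝ),
      ∑ y ∈ Finset.univ.filter (fun y : Fin (n + 1) → Bool => y 0 = y1),
        w y * ∏ t : Fin n, logitTrans α β (y t.castSucc) (y t.succ)
      = logistic (α + β) - logistic α)
    (μ : Measure ℝ) [IsProbabilityMeasure μ]
    (pstar : ℝ → ℝ) (hmeas : Measurable pstar)
    (h0 : ∀ α, 0 ≤ pstar α) (h1 : ∀ α, pstar α ≤ 1) :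
    ∑ y : Fin (n + 1) → Bool,
        w y * ∫ α, (if y 0 then 1 - pstar α else pstar α)
          * ∏ t : Fin n, logitTrans α β (y t.castSucc) (y t.succ) ∂μ
      = ∫ α, (logistic (α + β) - logistic α) ∂μ := by
  classical
  have hint : ∀ y : Fin (n+1) → Bool,
      Integrable (fun α => (if y 0 then 1 - pstar α else pstar α)
        * ∏ t : Fin n, logitTrans α β (y t.castSucc) (y t.succ)) μ := by
    intro y
    have hm : Measurable fun α => (if y 0 then 1 - pstar α else pstar α)
        * ∏ t : Fin n, logitTrans α β (y t.castSucc) (y t.succ) := by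
      apply Measurable.mul
      · split
        · exact measurable_const.sub hmeas
        · exact hmeas
      · exact measurable_prod_trans β n y
    refine (integrable_const (1:ℝ)).mono' hm.aestronglyMeasurable ?_
    filter_upwards with α
    have hq0 : (0:ℝ) ≤ (if y 0 then 1 - pstar α else pstar α) := by
      split
      · linarith [h1 α]
      · exact h0 α
    have hq1 : (if y 0 then 1 - pstar α else pstar α) ≤ 1 := by
      split
      · linarith [h0 α]
      · exact h1 α
    have hp0 : 0 ≤ ∏ t : Fin n, logitTrans α β (y t.castSucc) (y t.succ) :=
      Finset.prod_nonneg fun t _ => logitTrans_nonneg ..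
    have hp1 : ∏ t : Fin n, logitTrans α β (y t.castSucc) (y t.succ) ≤ 1 :=
      Finset.prod_le_one (fun t _ => logitTrans_nonneg ..)
        (fun t _ => logitTrans_le_one ..)
    rw [Real.norm_eq_abs, abs_of_nonneg (mul_nonneg hq0 hp0)]
    calc (if y 0 then 1 - pstar α else pstar α)
          * ∏ t : Fin n, logitTrans α β (y t.castSucc) (y t.succ)
        ≤ 1 * 1 := mul_le_mul hq1 hp1 hp0 one_pos.le
      _ = 1 := one_mul 1
  have hpoint : ∀ α : ℝ,
      ∑ y : Fin (n+1) → Bool, w y * ((if y 0 then 1 - pstar α else pstar α)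
        * ∏ t : Fin n, logitTrans α β (y t.castSucc) (y t.succ))
      = logistic (α + β) - logistic α := by
    intro α
    have hsplit := Finset.sum_filter_add_sum_filter_not Finset.univ
      (fun y : Fin (n+1) → Bool => y 0 = true)
      (fun y => w y * ((if y 0 then 1 - pstar α else pstar α)
        * ∏ t : Fin n, logitTrans α β (y t.castSucc) (y t.succ)))
    rw [← hsplit]
    have e1 : ∑ y ∈ Finset.univ.filter (fun y : Fin (n+1) → Bool => y 0 = true),
        w y * ((if y 0 then 1 - pstar α else pstar α)
          * ∏ t : Fin n, logitTrans α β (y t.castSucc) (y t.succ))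
        = (1 - pstar α) * (logistic (α + β) - logistic α) := by
      rw [← hw true α, Finset.mul_sum]
      refine Finset.sum_congr rfl fun y hy => ?_
      rw [Finset.mem_filter] at hy
      rw [if_pos hy.2]
      ring
    have e2 : ∑ y ∈ Finset.univ.filter (fun y : Fin (n+1) → Bool => ¬ (y 0 = true)),
        w y * ((if y 0 then 1 - pstar α else pstar α)
          * ∏ t : Fin n, logitTrans α β (y t.castSucc) (y t.succ))
        = pstar α * (logistic (α + β) - logistic α) := by
      have hfe : Finset.univ.filter (fun y : Fin (n+1) → Bool => ¬ (y 0 = true))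
          = Finset.univ.filter (fun y : Fin (n+1) → Bool => y 0 = false) := by
        apply Finset.filter_congr
        intro y _
        simp [Bool.not_eq_true]
      rw [hfe, ← hw false α, Finset.mul_sum]
      refine Finset.sum_congr rfl fun y hy => ?_
      rw [Finset.mem_filter] at hy
      rw [if_neg (by simp [hy.2])]
      ring
    rw [e1, e2]
    ring
  calc ∑ y : Fin (n + 1) → Bool,
        w y * ∫ α, (if y 0 then 1 - pstar α else pstar α)
          * ∏ t : Fin n, logitTrans α β (y t.castSucc) (y t.succ) ∂μ
      = ∫ α, ∑ y : Fin (n+1) → Bool, w y * ((if y 0 then 1 - pstar α else pstar α)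
          * ∏ t : Fin n, logitTrans α β (y t.castSucc) (y t.succ)) ∂μ := by
        rw [integral_finset_sum _ (fun y _ => (hint y).const_mul (w y))]
        exact Finset.sum_congr rfl fun y _ => (integral_const_mul _ _).symm
    _ = ∫ α, (logistic (α + β) - logistic α) ∂μ := by
        exact integral_congr_ae (Filter.Eventually.of_forall hpoint)
end

section
/- Let T ≥ 3 be an integer, let b > 0 with b ≠ 1, and fix y1 ∈ {0,1}. Then there exists a unique family of real weights { m(yT, n1) : yT ∈ {0,1}, n1 ∈ {yT, yT+1, ..., T−2+yT} } (a vector in ℝ^{2T−2}) such that the following polynomial identity in the real variable a holds: Σ_{yT ∈ {0,1}} Σ_{n1 = yT}^{T−2+yT} m(yT, n1) · a^{n1} · (1+a)^{n1−yT} · (1+ab)^{T−2−n1+yT} = (b−1) · a · (1+a)^{T−2−y1} · (1+ab)^{T−3+y1}. (Proposition 3: both sides are polynomials in a of degree at most 2T−3, and matching coefficients yields a nonsingular linear system of 2T−2 equations in the 2T−2 weights.) -/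
open Polynomial Finset

private lemma prop3_indep (b : ℝ) (hb1 : b ≠ 1) :
    ∀ (K : ℕ) (m0 m1 : ℕ → ℝ),
      (∑ k ∈ range (K+1), (C (m0 k) + C (m1 k) * X) * (X*(1+X))^k * (1+C b*X)^(K-k)) = 0 →
      ∀ k ≤ K, m0 k = 0 ∧ m1 k = 0 := by
  intro K
  induction K with
  | zero =>
    intro m0 m1 h k hk
    interval_cases k
    have h0 := congrArg (eval 0) h
    have h1 := congrArg (eval 1) h
    simp at h0 h1
    exact ⟨h0, by linarith⟩
  | succ K ih =>
    intro m0 m1 h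
    rw [Finset.sum_range_succ'] at h
    have h0 : m0 0 = 0 := by
      have := congrArg (eval 0) h
      simpa [eval_finset_sum] using this
    have h1 : m1 0 = 0 := by
      have := congrArg (eval (-1)) h
      simp [eval_finset_sum] at this
      rcases this with h' | h'
      · linarith
      · exact absurd (by linarith : b = 1) hb1
    have h' : ∑ k ∈ range (K+1),
        (C (m0 (k+1)) + C (m1 (k+1)) * X) * (X*(1+X))^(k+1) * (1+C b*X)^(K-k) = 0 := by
      simpa [h0, h1, Nat.succ_sub_succ] using h
    have hfac : (X*(1+X)) * (∑ k ∈ range (K+1),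
        (C (m0 (k+1)) + C (m1 (k+1)) * X) * (X*(1+X))^k * (1+C b*X)^(K-k)) = 0 := by
      rw [Finset.mul_sum, ← h']
      exact Finset.sum_congr rfl fun k _ => by ring
    have hXne : (X*(1+X) : Polynomial ℝ) ≠ 0 := by
      refine mul_ne_zero X_ne_zero ?_
      intro hc
      simpa using congrArg (eval 0) hc
    have hG := (mul_eq_zero.mp hfac).resolve_left hXne
    have key := ih (fun k => m0 (k+1)) (fun k => m1 (k+1)) hG
    intro k hk
    match k with
    | 0 => exact ⟨h0, h1⟩
    | (j+1) => exact key j (by omega)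

/-- the basis family of polynomials -/
private noncomputable def prop3Fam (b : ℝ) (K : ℕ) : Bool × Fin (K+1) → Polynomial ℝ :=
  fun i => (cond i.1 X 1) * (X*(1+X))^(i.2:ℕ) * (1+C b*X)^(K-(i.2:ℕ))

private lemma prop3Fam_sum (b : ℝ) (K : ℕ) (c : Bool × Fin (K+1) → ℝ) :
    ∑ i, c i • prop3Fam b K i
      = ∑ k ∈ range (K+1),
          (C ((fun n => if h : n < K+1 then c (false, ⟨n, h⟩) else 0) k)
            + C ((fun n => if h : n < K+1 then c (true, ⟨n, h⟩) else 0) k) * X)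
            * (X*(1+X))^k * (1+C b*X)^(K-k) := by
  rw [← Fin.sum_univ_eq_sum_range, Fintype.sum_prod_type, Fintype.sum_bool,
    ← Finset.sum_add_distrib]
  refine Finset.sum_congr rfl fun k _ => ?_
  simp only [k.isLt, dif_pos, Fin.eta, prop3Fam, smul_eq_C_mul, Bool.cond_true, Bool.cond_false]
  ring

private lemma prop3Fam_eval (b : ℝ) (K : ℕ) (c : Bool × Fin (K+1) → ℝ) (a : ℝ) :
    eval a (∑ i, c i • prop3Fam b K i)
      = ∑ yT : Bool, ∑ k : Fin (K+1),
          c (yT, k) * a ^ (yT.toNat + (k : ℕ)) * (1 + a) ^ (k : ℕ)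
            * (1 + a * b) ^ (K - (k : ℕ)) := by
  rw [eval_finset_sum, Fintype.sum_prod_type]
  refine Finset.sum_congr rfl fun yT _ => Finset.sum_congr rfl fun k _ => ?_
  cases yT <;>
    simp only [prop3Fam, smul_eq_C_mul, eval_mul, eval_add, eval_pow, eval_one, eval_X, eval_C,
      Bool.cond_true, Bool.cond_false, Bool.toNat_true, Bool.toNat_false] <;>
    rw [mul_pow] <;> ring

private lemma prop3Fam_li (b : ℝ) (hb1 : b ≠ 1) (K : ℕ) :
    LinearIndependent ℝ (prop3Fam b K) := by
  rw [Fintype.linearIndependent_iff]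
  intro g hg i
  rw [prop3Fam_sum] at hg
  have key := prop3_indep b hb1 K _ _ hg
  obtain ⟨yT, k⟩ := i
  have hk := key k (by omega : (k:ℕ) ≤ K)
  cases yT
  · simpa [k.isLt, Fin.eta] using hk.1
  · simpa [k.isLt, Fin.eta] using hk.2

private lemma prop3_mem_degreeLT (b : ℝ) (K : ℕ) (i : Bool × Fin (K+1)) :
    prop3Fam b K i ∈ degreeLT ℝ (2*K+2) := by
  refine mem_degreeLT.2 (lt_of_le_of_lt degree_le_natDegree ?_)
  have h1 : ((cond i.1 X 1 : ℝ[X])).natDegree ≤ 1 := by cases i.1 <;> simp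
  have h2 : (X*(1+X) : ℝ[X]).natDegree ≤ 2 := by compute_degree
  have h3 : (1+C b*X : ℝ[X]).natDegree ≤ 1 := by compute_degree
  have hb2 : ((X*(1+X) : ℝ[X])^(i.2:ℕ)).natDegree ≤ (i.2:ℕ) * 2 :=
    natDegree_pow_le.trans (Nat.mul_le_mul_left _ h2)
  have hb3 : ((1+C b*X : ℝ[X])^(K-(i.2:ℕ))).natDegree ≤ (K-(i.2:ℕ)) * 1 :=
    natDegree_pow_le.trans (Nat.mul_le_mul_left _ h3)
  have := natDegree_mul_le.trans
    (add_le_add (natDegree_mul_le.trans (add_le_add h1 hb2)) hb3)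
  have hk : (i.2:ℕ) ≤ K := by omega
  refine lt_of_le_of_lt ?_ (show ((2*K+1 : ℕ) : WithBot ℕ) < ((2*K+2 : ℕ) : WithBot ℕ) by
    exact_mod_cast Nat.lt_succ_self _)
  exact_mod_cast this.trans (by omega)

private lemma prop3_finrank (n : ℕ) : Module.finrank ℝ (degreeLT ℝ n) = n := by
  have : FiniteDimensional ℝ (degreeLT ℝ n) :=
    LinearEquiv.finiteDimensional (degreeLTEquiv ℝ n).symm
  rw [(degreeLTEquiv ℝ n).finrank_eq]; simp

/-- Proposition 3: for `T ≥ 3`, `b > 0`, `b ≠ 1`, and a fixed initial value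
`y₁ ∈ {0,1}`, there is a unique family of weights
`m(y_T, n₁)` for `y_T ∈ {0,1}` and `n₁ ∈ {y_T, …, T−2+y_T}` (parametrized
here by `y_T : Bool` and `k : Fin (T−1)` with `n₁ = y_T + k`) such that the
polynomial identity
`Σ_{y_T} Σ_{n₁} m(y_T,n₁) · a^{n₁} (1+a)^{n₁−y_T} (1+ab)^{T−2−n₁+y_T}
  = (b−1) · a · (1+a)^{T−2−y₁} (1+ab)^{T−3+y₁}`
holds for all real `a`. -/
theorem prop3_unique_weights (T : ℕ) (hT : 3 ≤ T) (b : ℝ)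
    (hb : 0 < b) (hb1 : b ≠ 1) (y1 : Bool) :
    ∃! m : Bool → Fin (T - 1) → ℝ, ∀ a : ℝ,
      ∑ yT : Bool, ∑ k : Fin (T - 1),
        m yT k * a ^ (yT.toNat + (k : ℕ)) * (1 + a) ^ (k : ℕ)
          * (1 + a * b) ^ (T - 2 - (k : ℕ))
      = (b - 1) * a * (1 + a) ^ (T - 2 - y1.toNat)
          * (1 + a * b) ^ (T - 3 + y1.toNat) := by
  obtain ⟨K, rfl⟩ : ∃ K, T = K + 2 := ⟨T - 2, by omega⟩
  have hK : 1 ≤ K := by omega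
  haveI : FiniteDimensional ℝ (degreeLT ℝ (2*K+2)) :=
    LinearEquiv.finiteDimensional (degreeLTEquiv ℝ (2*K+2)).symm
  set R : ℝ[X] := C (b-1) * X * (1+X)^(K - y1.toNat) * (1+C b*X)^(K-1+y1.toNat) with hRdef
  have li := prop3Fam_li b hb1 K
  have hspan : Submodule.span ℝ (Set.range (prop3Fam b K)) = degreeLT ℝ (2*K+2) := by
    refine Submodule.eq_of_le_of_finrank_le
      (Submodule.span_le.2 (Set.range_subset_iff.2 (prop3_mem_degreeLT b K))) ?_
    rw [prop3_finrank, finrank_span_eq_card li]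
    simp only [Fintype.card_prod, Fintype.card_bool, Fintype.card_fin]
    omega
  have hRmem : R ∈ degreeLT ℝ (2*K+2) := by
    refine mem_degreeLT.2 (lt_of_le_of_lt degree_le_natDegree ?_)
    have h2 : ((1+X : ℝ[X])^(K - y1.toNat)).natDegree ≤ (K - y1.toNat) * 1 :=
      natDegree_pow_le.trans (Nat.mul_le_mul_left _ (by compute_degree))
    have h3 : ((1+C b*X : ℝ[X])^(K-1+y1.toNat)).natDegree ≤ (K-1+y1.toNat) * 1 :=
      natDegree_pow_le.trans (Nat.mul_le_mul_left _ (by compute_degree))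
    have h1 : (C (b-1) * X : ℝ[X]).natDegree ≤ 1 := by compute_degree
    have := natDegree_mul_le.trans
      (add_le_add (natDegree_mul_le.trans (add_le_add h1 h2)) h3)
    have hy : y1.toNat ≤ 1 := by cases y1 <;> simp
    refine lt_of_le_of_lt ?_ (show ((2*K+1 : ℕ) : WithBot ℕ) < ((2*K+2 : ℕ) : WithBot ℕ) by
      exact_mod_cast Nat.lt_succ_self _)
    exact_mod_cast this.trans (by omega)
  obtain ⟨c, hc⟩ := Submodule.mem_span_range_iff_exists_fun ℝ |>.mp (hspan ▸ hRmem)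
  have hevalR : ∀ a : ℝ, eval a R
      = (b - 1) * a * (1 + a) ^ (K - y1.toNat) * (1 + a * b) ^ (K-1+y1.toNat) := by
    intro a
    simp only [hRdef, eval_mul, eval_add, eval_pow, eval_one, eval_X, eval_C]
    ring
  refine ⟨fun yT k => c (yT, k), fun a => ?_, fun m' hm' => ?_⟩
  · have h := prop3Fam_eval b K c a
    rw [hc, hevalR] at h
    exact h.symm
  · have hc' : ∑ i : Bool × Fin (K+1), m' i.1 i.2 • prop3Fam b K i = R := by
      refine Polynomial.funext fun a => ?_
      rw [prop3Fam_eval, hevalR a]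
      exact hm' a
    have hzero : ∑ i : Bool × Fin (K+1), (m' i.1 i.2 - c i) • prop3Fam b K i = 0 := by
      simp only [sub_smul, Finset.sum_sub_distrib, hc', hc, sub_self]
    have := Fintype.linearIndependent_iff.mp li _ hzero
    funext yT k
    exact sub_eq_zero.mp (this (yT, k))
end

section
/- Let Λ(u) = e^u/(1+e^u). For all real numbers α, β1 and all p0, p1 ≥ 0 with p0 + p1 = 1, define the conditional four-period history probabilities of the duration-dependent binary logit model (initial duration 1 when the initial choice is 1): P_{0010} = p0·(1−Λ(α))·Λ(α)·(1−Λ(α+β1)); P_{0100} = p0·Λ(α)·(1−Λ(α+β1))·(1−Λ(α)); P_{0011} = p0·(1−Λ(α))·Λ(α)·Λ(α+β1); P_{1010} = p1·(1−Λ(α+β1))·Λ(α)·(1−Λ(α+β1)); P_{1011} = p1·(1−Λ(α+β1))·Λ(α)·Λ(α+β1). Then: ((e^{β1}−1)/2)·(P_{0010} + P_{0100}) + ((e^{β1}−1)/e^{β1})·P_{0011} + (e^{β1}−1)·(P_{1010} + P_{1011}) = Λ(α+β1) − Λ(α). (Key pointwise identity in the proof of Proposition 5 for AME_{0→1}.)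 -/
/-- Key pointwise identity in the proof of Proposition 5 for `AME_{0→1}`:
with the conditional four-period history probabilities of the
duration-dependent binary logit model (initial duration 1 when the initial
choice is 1), `p0 + p1 = 1`, `p0, p1 ≥ 0`, and `β₁ = β(1)`:
`((e^{β₁}−1)/2)(P₀₀₁₀ + P₀₁₀₀) + ((e^{β₁}−1)/e^{β₁}) P₀₀₁₁
  + (e^{β₁}−1)(P₁₀₁₀ + P₁₀₁₁) = Λ(α+β₁) − Λ(α)`. -/
theorem prop5_pointwise (α β1 p0 p1 : ℝ)
    (hp0 : 0 ≤ p0) (hp1 : 0 ≤ p1) (hsum : p0 + p1 = 1) :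
    ((Real.exp β1 - 1) / 2)
        * (p0 * (1 - logistic α) * logistic α * (1 - logistic (α + β1))
            + p0 * logistic α * (1 - logistic (α + β1)) * (1 - logistic α))
      + ((Real.exp β1 - 1) / Real.exp β1)
        * (p0 * (1 - logistic α) * logistic α * logistic (α + β1))
      + (Real.exp β1 - 1)
        * (p1 * (1 - logistic (α + β1)) * logistic α * (1 - logistic (α + β1))
            + p1 * (1 - logistic (α + β1)) * logistic α * logistic (α + β1))
      = logistic (α + β1) - logistic α := by
  have hq : p1 = 1 - p0 := by linarith
  subst hq
  have hab : Real.exp (α + β1) = Real.exp α * Real.exp β1 := Real.exp_add _ _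
  simp only [logistic, hab]
  have h1 : (1 : ℝ) + Real.exp α ≠ 0 := by positivity
  have h2 : (1 : ℝ) + Real.exp α * Real.exp β1 ≠ 0 := by positivity
  field_simp
  ring
end

section
/- In the binary logit model with duration dependence, with history probabilities P_{y1,y2,y3,y4} defined by integrating over a probability measure μ on ℝ the conditional history probabilities (initial duration 1 when y1 = 1), and AME_{0→2} = ∫ (Λ(α+β2) − Λ(α)) dμ(α), the following identity holds: AME_{0→2} = ((e^{β2} − 1)/2)·(P_{0,0,1,0} + P_{0,1,0,0}) + ((e^{β2} − 1)/e^{β1})·P_{0,0,1,1} + ( (e^{β2}(1 − e^{β2}))/e^{β1} + e^{β2} − 1 )·P_{0,1,1,0} + ( e^{β1} − e^{β1}/e^{β2} )·(P_{1,0,1,0} + P_{1,0,1,1}) + ( (e^{β2} − 1)/e^{β1} − 1 + 1/e^{β2} )·P_{1,1,0,0}. (Proposition 5, identification of AME_{0→2}, equation (71).) -/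
open MeasureTheory

lemma integrable_aux (μ : Measure ℝ) [IsProbabilityMeasure μ] (f : ℝ → ℝ)
    (hm : Measurable f) (hb : ∀ α, |f α| ≤ 1) : Integrable f μ := by
  apply Integrable.mono' (integrable_const (1:ℝ)) hm.aestronglyMeasurable
  filter_upwards with a
  simpa using hb a

lemma abs4 {a b c d : ℝ} (ha0 : 0 ≤ a) (ha1 : a ≤ 1) (hb0 : 0 ≤ b) (hb1 : b ≤ 1)
    (hc0 : 0 ≤ c) (hc1 : c ≤ 1) (hd0 : 0 ≤ d) (hd1 : d ≤ 1) : |a*b*c*d| ≤ 1 := by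
  rw [abs_of_nonneg (by positivity)]
  have hab : a*b ≤ 1 := mul_le_one₀ ha1 hb0 hb1
  have habc : a*b*c ≤ 1 := mul_le_one₀ hab hc0 hc1
  exact mul_le_one₀ habc hd0 hd1

lemma key (β1 β2 p α : ℝ) :
    logistic (α + β2) - logistic α
      = ((Real.exp β2 - 1) / 2)
          * (p * (1 - logistic α) * logistic α * (1 - logistic (α + β1))
              + p * logistic α * (1 - logistic (α + β1)) * (1 - logistic α))
        + ((Real.exp β2 - 1) / Real.exp β1)
          * (p * (1 - logistic α) * logistic α * logistic (α + β1))
        + ((Real.exp β2 * (1 - Real.exp β2)) / Real.exp β1 + Real.exp β2 - 1)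
          * (p * logistic α * logistic (α + β1) * (1 - logistic (α + β2)))
        + (Real.exp β1 - Real.exp β1 / Real.exp β2)
          * ((1 - p) * (1 - logistic (α + β1)) * logistic α * (1 - logistic (α + β1))
              + (1 - p) * (1 - logistic (α + β1)) * logistic α * logistic (α + β1))
        + ((Real.exp β2 - 1) / Real.exp β1 - 1 + 1 / Real.exp β2)
          * ((1 - p) * logistic (α + β1) * (1 - logistic (α + β2)) * (1 - logistic α)) := by
  unfold logistic
  rw [Real.exp_add, Real.exp_add]
  have ha := Real.exp_pos α
  have h1 := Real.exp_pos β1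
  have h2 := Real.exp_pos β2
  have d0 : (1:ℝ) + Real.exp α ≠ 0 := by positivity
  have d1 : (1:ℝ) + Real.exp α * Real.exp β1 ≠ 0 := by positivity
  have d2 : (1:ℝ) + Real.exp α * Real.exp β2 ≠ 0 := by positivity
  field_simp
  ring

/-- Proposition 5, identification of `AME_{0→2}` (equation (71)): in the
binary logit model with duration dependence (probability of choosing 1 is
`Λ(α)` after lagged choice 0 and `Λ(α + β(d))` after lagged choice 1 with
duration `d`; `β₁ = β(1)`, `β₂ = β(2)`; initial duration 1 when `y₁ = 1`),
`AME_{0→2} = ∫ (Λ(α+β₂) − Λ(α)) dμ(α)` equals the stated weighted sum of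
the four-period history probabilities, with `p*(α)` the probability of the
initial condition `y₁ = 0`. -/
theorem prop5_AME_0_to_2 (β1 β2 : ℝ) (μ : Measure ℝ) [IsProbabilityMeasure μ]
    (pstar : ℝ → ℝ) (hmeas : Measurable pstar)
    (h0 : ∀ α, 0 ≤ pstar α) (h1 : ∀ α, pstar α ≤ 1) :
    (∫ α, (logistic (α + β2) - logistic α) ∂μ)
      = ((Real.exp β2 - 1) / 2)
          * ((∫ α, pstar α * (1 - logistic α) * logistic α * (1 - logistic (α + β1)) ∂μ)
              + ∫ α, pstar α * logistic α * (1 - logistic (α + β1)) * (1 - logistic α) ∂μ)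
        + ((Real.exp β2 - 1) / Real.exp β1)
          * (∫ α, pstar α * (1 - logistic α) * logistic α * logistic (α + β1) ∂μ)
        + ((Real.exp β2 * (1 - Real.exp β2)) / Real.exp β1 + Real.exp β2 - 1)
          * (∫ α, pstar α * logistic α * logistic (α + β1) * (1 - logistic (α + β2)) ∂μ)
        + (Real.exp β1 - Real.exp β1 / Real.exp β2)
          * ((∫ α, (1 - pstar α) * (1 - logistic (α + β1)) * logistic α * (1 - logistic (α + β1)) ∂μ)
              + ∫ α, (1 - pstar α) * (1 - logistic (α + β1)) * logistic α * logistic (α + β1) ∂μ)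
        + ((Real.exp β2 - 1) / Real.exp β1 - 1 + 1 / Real.exp β2)
          * (∫ α, (1 - pstar α) * logistic (α + β1) * (1 - logistic (α + β2)) * (1 - logistic α) ∂μ) := by
  
  have m0 : Measurable (fun α : ℝ => logistic α) := logistic_measurable
  have m1 : Measurable (fun α : ℝ => logistic (α + β1)) :=
    logistic_measurable.comp (measurable_add_const β1)
  have m2 : Measurable (fun α : ℝ => logistic (α + β2)) :=
    logistic_measurable.comp (measurable_add_const β2)
  have hq0 : ∀ α, 0 ≤ 1 - pstar α := fun α => by linarith [h1 α]
  have hq1 : ∀ α, 1 - pstar α ≤ 1 := fun α => by linarith [h0 α]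
  have L0 := logistic_nonneg
  have L1 := logistic_le_one
  have s0 : ∀ u : ℝ, 0 ≤ 1 - logistic u := fun u => by linarith [L1 u]
  have s1 : ∀ u : ℝ, 1 - logistic u ≤ 1 := fun u => by linarith [L0 u]
  have I1 : Integrable (fun α => pstar α * (1 - logistic α) * logistic α * (1 - logistic (α + β1))) μ :=
    integrable_aux μ _ (((hmeas.mul (measurable_const.sub m0)).mul m0).mul (measurable_const.sub m1))
      (fun α => abs4 (h0 α) (h1 α) (s0 α) (s1 α) (L0 α) (L1 α) (s0 _) (s1 _))
  have I2 : Integrable (fun α => pstar α * logistic α * (1 - logistic (α + β1)) * (1 - logistic α)) μ :=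
    integrable_aux μ _ (((hmeas.mul m0).mul (measurable_const.sub m1)).mul (measurable_const.sub m0))
      (fun α => abs4 (h0 α) (h1 α) (L0 α) (L1 α) (s0 _) (s1 _) (s0 α) (s1 α))
  have I3 : Integrable (fun α => pstar α * (1 - logistic α) * logistic α * logistic (α + β1)) μ :=
    integrable_aux μ _ (((hmeas.mul (measurable_const.sub m0)).mul m0).mul m1)
      (fun α => abs4 (h0 α) (h1 α) (s0 α) (s1 α) (L0 α) (L1 α) (L0 _) (L1 _))
  have I4 : Integrable (fun α => pstar α * logistic α * logistic (α + β1) * (1 - logistic (α + β2))) μ :=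
    integrable_aux μ _ (((hmeas.mul m0).mul m1).mul (measurable_const.sub m2))
      (fun α => abs4 (h0 α) (h1 α) (L0 α) (L1 α) (L0 _) (L1 _) (s0 _) (s1 _))
  have I5 : Integrable (fun α => (1 - pstar α) * (1 - logistic (α + β1)) * logistic α * (1 - logistic (α + β1))) μ :=
    integrable_aux μ _ ((((measurable_const.sub hmeas).mul (measurable_const.sub m1)).mul m0).mul (measurable_const.sub m1))
      (fun α => abs4 (hq0 α) (hq1 α) (s0 _) (s1 _) (L0 α) (L1 α) (s0 _) (s1 _))
  have I6 : Integrable (fun α => (1 - pstar α) * (1 - logistic (α + β1)) * logistic α * logistic (α + β1)) μ :=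
    integrable_aux μ _ ((((measurable_const.sub hmeas).mul (measurable_const.sub m1)).mul m0).mul m1)
      (fun α => abs4 (hq0 α) (hq1 α) (s0 _) (s1 _) (L0 α) (L1 α) (L0 _) (L1 _))
  have I7 : Integrable (fun α => (1 - pstar α) * logistic (α + β1) * (1 - logistic (α + β2)) * (1 - logistic α)) μ :=
    integrable_aux μ _ ((((measurable_const.sub hmeas).mul m1).mul (measurable_const.sub m2)).mul (measurable_const.sub m0))
      (fun α => abs4 (hq0 α) (hq1 α) (L0 _) (L1 _) (s0 _) (s1 _) (s0 α) (s1 α))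
  have hkey : (∫ α, (logistic (α + β2) - logistic α) ∂μ)
      = ∫ α, (((Real.exp β2 - 1) / 2)
          * (pstar α * (1 - logistic α) * logistic α * (1 - logistic (α + β1))
              + pstar α * logistic α * (1 - logistic (α + β1)) * (1 - logistic α))
        + ((Real.exp β2 - 1) / Real.exp β1)
          * (pstar α * (1 - logistic α) * logistic α * logistic (α + β1))
        + ((Real.exp β2 * (1 - Real.exp β2)) / Real.exp β1 + Real.exp β2 - 1)
          * (pstar α * logistic α * logistic (α + β1) * (1 - logistic (α + β2)))
        + (Real.exp β1 - Real.exp β1 / Real.exp β2)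
          * ((1 - pstar α) * (1 - logistic (α + β1)) * logistic α * (1 - logistic (α + β1))
              + (1 - pstar α) * (1 - logistic (α + β1)) * logistic α * logistic (α + β1))
        + ((Real.exp β2 - 1) / Real.exp β1 - 1 + 1 / Real.exp β2)
          * ((1 - pstar α) * logistic (α + β1) * (1 - logistic (α + β2)) * (1 - logistic α))) ∂μ :=
    integral_congr_ae (Filter.Eventually.of_forall fun α => key β1 β2 (pstar α) α)
  rw [hkey]
  have J1 : Integrable (fun α => (Real.exp β2 - 1) / 2 * (pstar α * (1 - logistic α) * logistic α * (1 - logistic (α + β1)) + pstar α * logistic α * (1 - logistic (α + β1)) * (1 - logistic α))) μ := (I1.add I2).const_mul _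
  have J2 : Integrable (fun α => (Real.exp β2 - 1) / Real.exp β1 * (pstar α * (1 - logistic α) * logistic α * logistic (α + β1))) μ := I3.const_mul _
  have J3 : Integrable (fun α => (Real.exp β2 * (1 - Real.exp β2) / Real.exp β1 + Real.exp β2 - 1) * (pstar α * logistic α * logistic (α + β1) * (1 - logistic (α + β2)))) μ := I4.const_mul _
  have J4 : Integrable (fun α => (Real.exp β1 - Real.exp β1 / Real.exp β2) * ((1 - pstar α) * (1 - logistic (α + β1)) * logistic α * (1 - logistic (α + β1)) + (1 - pstar α) * (1 - logistic (α + β1)) * logistic α * logistic (α + β1))) μ := (I5.add I6).const_mul _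
  have J5 : Integrable (fun α => ((Real.exp β2 - 1) / Real.exp β1 - 1 + 1 / Real.exp β2) * ((1 - pstar α) * logistic (α + β1) * (1 - logistic (α + β2)) * (1 - logistic α))) μ := I7.const_mul _
  have K1 : Integrable (fun α => (Real.exp β2 - 1) / 2 * (pstar α * (1 - logistic α) * logistic α * (1 - logistic (α + β1)) + pstar α * logistic α * (1 - logistic (α + β1)) * (1 - logistic α)) + (Real.exp β2 - 1) / Real.exp β1 * (pstar α * (1 - logistic α) * logistic α * logistic (α + β1))) μ := J1.add J2
  have K2 : Integrable (fun α => (Real.exp β2 - 1) / 2 * (pstar α * (1 - logistic α) * logistic α * (1 - logistic (α + β1)) + pstar α * logistic α * (1 - logistic (α + β1)) * (1 - logistic α)) + (Real.exp β2 - 1) / Real.exp β1 * (pstar α * (1 - logistic α) * logistic α * logistic (α + β1)) + (Real.exp β2 * (1 - Real.exp β2) / Real.exp β1 + Real.exp β2 - 1) * (pstar α * logistic α * logistic (α + β1) * (1 - logistic (α + β2)))) μ := K1.add J3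
  have K3 : Integrable (fun α => (Real.exp β2 - 1) / 2 * (pstar α * (1 - logistic α) * logistic α * (1 - logistic (α + β1)) + pstar α * logistic α * (1 - logistic (α + β1)) * (1 - logistic α)) + (Real.exp β2 - 1) / Real.exp β1 * (pstar α * (1 - logistic α) * logistic α * logistic (α + β1)) + (Real.exp β2 * (1 - Real.exp β2) / Real.exp β1 + Real.exp β2 - 1) * (pstar α * logistic α * logistic (α + β1) * (1 - logistic (α + β2))) + (Real.exp β1 - Real.exp β1 / Real.exp β2) * ((1 - pstar α) * (1 - logistic (α + β1)) * logistic α * (1 - logistic (α + β1)) + (1 - pstar α) * (1 - logistic (α + β1)) * logistic α * logistic (α + β1))) μ := K2.add J4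
  rw [integral_add K3 J5, integral_add K2 J4, integral_add K1 J3, integral_add J1 J2,
      integral_const_mul _ _, integral_const_mul _ _, integral_const_mul _ _, integral_const_mul _ _,
      integral_const_mul _ _, integral_add I1 I2, integral_add I5 I6]
end
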